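/- For any integrable real random variables X and Y, sup_{p ∈ [0,1]} (F^{(−2)}_Y(p) − F^{(−2)}_X(p)) = sup_{η ∈ ℝ} (F^{(2)}_X(η) − F^{(2)}_Y(η)). -/

import Mathlib

open MeasureTheory Filter Set

noncomputable section

/-- Distribution function `F_Z(η) = P(Z ≤ η)`. -/
def cdfRV {Ω : Type*} [MeasurableSpace Ω] (P : Measure Ω) (Z : Ω → ℝ) (η : ℝ) : ℝ :=
  (P {ω | Z ω ≤ η}).toReal

/-- Quantile function `F⁻¹_Z(p) = inf {η | F_Z(η) ≥ p}`. -/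
def qf {Ω : Type*} [MeasurableSpace Ω] (P : Measure Ω) (Z : Ω → ℝ) (p : ℝ) : ℝ :=
  sInf {η : ℝ | p ≤ cdfRV P Z η}

/-- Absolute Lorenz function `F^{(-2)}_Z(p) = ∫₀^p F⁻¹_Z(t) dt`. -/
def lorenz {Ω : Type*} [MeasurableSpace Ω] (P : Measure Ω) (Z : Ω → ℝ) (p : ℝ) : ℝ :=
  ∫ t in (0:ℝ)..p, qf P Z t

/-- Shortfall function `F^{(2)}_Z(η) = E[max(η - Z, 0)]`. -/
def shortfall {Ω : Type*} [MeasurableSpace Ω] (P : Measure Ω) (Z : Ω → ℝ) (η : ℝ) : ℝ :=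
  ∫ ω, max (η - Z ω) 0 ∂P

/-- Second-order stochastic dominance. -/
def SSD {Ω : Type*} [MeasurableSpace Ω] (P : Measure Ω) (Z Y : Ω → ℝ) : Prop :=
  ∀ η : ℝ, shortfall P Z η ≤ shortfall P Y η

/-- First-order Wasserstein distance. -/
def W1 {Ω : Type*} [MeasurableSpace Ω] (P : Measure Ω) (X Z : Ω → ℝ) : ℝ :=
  ∫ p in (0:ℝ)..1, |qf P X p - qf P Z p|

/-- Distance from `X` to the set `A₂(Y)` of integrable random variables dominating `Y`
in the second order, in terms of `W₁`. -/
def distA2 {Ω : Type*} [MeasurableSpace Ω] (P : Measure Ω) (X Y : Ω → ℝ) : ℝ :=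
  sInf {d : ℝ | ∃ Z : Ω → ℝ, Integrable Z P ∧ SSD P Z Y ∧ d = W1 P X Z}

/-- An atomless probability space. -/
def Atomless {Ω : Type*} [MeasurableSpace Ω] (P : Measure Ω) : Prop :=
  ∀ s : Set Ω, MeasurableSet s → P s ≠ 0 →
    ∃ t : Set Ω, t ⊆ s ∧ MeasurableSet t ∧ 0 < P t ∧ P t < P s

/-- `r`-th order shortfall transform `F^{(r)}_Z(η) = (1/Γ(r)) E[max(η-Z,0)^{r-1}]`,
with the convention `max(η-z,0)^0 = 𝟙_{z ≤ η}`. -/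
def sfr {Ω : Type*} [MeasurableSpace Ω] (P : Measure Ω) (Z : Ω → ℝ) (r η : ℝ) : ℝ :=
  (1 / Real.Gamma r) * ∫ ω, (if Z ω ≤ η then (η - Z ω) ^ (r - 1) else 0) ∂P

/-- `r`-th order stochastic dominance: `Z ≽_{(r)} Y`. -/
def domR {Ω : Type*} [MeasurableSpace Ω] (P : Measure Ω) (Z Y : Ω → ℝ) (r : ℝ) : Prop :=
  ∀ η : ℝ, sfr P Z r η ≤ sfr P Y r η


section Helper
open ProbabilityTheory
open scoped Topology
set_option linter.unusedSectionVars false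
namespace Stmt8Aux


/-- quantile of a real measure -/
def Q (μ : Measure ℝ) (p : ℝ) : ℝ := sInf {η : ℝ | p ≤ cdf μ η}

variable {μ : Measure ℝ} [IsProbabilityMeasure μ]

lemma bddBelow_set (ht : (0:ℝ) < t) : BddBelow {η : ℝ | t ≤ cdf μ η} := by
  obtain ⟨a, ha⟩ : ∃ a : ℝ, ∀ b ≤ a, cdf μ b < t := by
    have := (tendsto_cdf_atBot μ).eventually (eventually_lt_nhds ht)
    exact eventually_atBot.1 this
  refine ⟨a, fun η hη => ?_⟩
  by_contra h
  push_neg at h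
  exact absurd hη (not_le.2 (ha η h.le))

lemma nonempty_set (ht : t < (1:ℝ)) : {η : ℝ | t ≤ cdf μ η}.Nonempty := by
  obtain ⟨a, ha⟩ : ∃ a : ℝ, ∀ b ≥ a, t < cdf μ b := by
    have := (tendsto_cdf_atTop μ).eventually (eventually_gt_nhds ht)
    exact eventually_atTop.1 this
  exact ⟨a, (ha a le_rfl).le⟩

lemma galois (ht : t ∈ Ioo (0:ℝ) 1) (η : ℝ) : Q μ t ≤ η ↔ t ≤ cdf μ η := by
  constructor
  · intro h
    have htd : Tendsto (cdf μ) (𝓝[>] η) (𝓝 (cdf μ η)) :=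
      ((cdf μ).right_continuous η).tendsto.mono_left
        (nhdsWithin_mono _ Ioi_subset_Ici_self)
    refine ge_of_tendsto htd ?_
    filter_upwards [self_mem_nhdsWithin] with s hs
    obtain ⟨a, haset, has⟩ := exists_lt_of_csInf_lt (nonempty_set ht.2) (h.trans_lt hs)
    exact le_trans haset (monotone_cdf μ has.le)
  · intro h
    exact csInf_le (bddBelow_set ht.1) h

lemma Qmono : MonotoneOn (Q μ) (Ioo (0:ℝ) 1) := by
  intro a ha b hb hab
  exact (galois ha _).2 (le_trans hab ((galois hb _).1 le_rfl))

lemma measurable_ind : Measurable ((Ioo (0:ℝ) 1).indicator (Q μ)) := by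
  apply measurable_of_Iic
  intro a
  have hset : (Ioo (0:ℝ) 1).indicator (Q μ) ⁻¹' Iic a =
      (Ioo (0:ℝ) 1 ∩ Iic (cdf μ a)) ∪ (if (0:ℝ) ≤ a then (Ioo (0:ℝ) 1)ᶜ else ∅) := by
    ext t
    by_cases ht : t ∈ Ioo (0:ℝ) 1
    · simp only [mem_preimage, mem_Iic, indicator_of_mem ht, mem_union, mem_inter_iff, ht,
        true_and, mem_Iic]
      rw [galois ht]
      constructor
      · exact fun h => Or.inl h
      · rintro (h | h)
        · exact h
        · split_ifs at h with h0
          · exact absurd ht h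
          · exact absurd h (notMem_empty t)
    · simp only [mem_preimage, mem_Iic, indicator_of_notMem ht, mem_union, mem_inter_iff, ht,
        false_and, false_or]
      split_ifs with h0
      · simp [ht, h0]
      · simp only [mem_empty_iff_false, iff_false]
        linarith [not_le.1 h0]
  rw [hset]
  split_ifs <;>
    exact MeasurableSet.union (measurableSet_Ioo.inter measurableSet_Iic) (by measurability)

lemma aemeas_Q : AEMeasurable (Q μ) (volume.restrict (Ioo (0:ℝ) 1)) :=
  ⟨(Ioo (0:ℝ) 1).indicator (Q μ), measurable_ind,
    ((indicator_ae_eq_restrict measurableSet_Ioo).symm : _)⟩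



instance : IsProbabilityMeasure (volume.restrict (Ioo (0:ℝ) 1)) := by
  constructor
  simp [Real.volume_Ioo]

lemma Qmap : (volume.restrict (Ioo (0:ℝ) 1)).map (Q μ) = μ := by
  have : IsProbabilityMeasure ((volume.restrict (Ioo (0:ℝ) 1)).map (Q μ)) :=
    Measure.isProbabilityMeasure_map aemeas_Q
  refine Measure.ext_of_Iic _ _ fun a => ?_
  rw [Measure.map_apply_of_aemeasurable aemeas_Q measurableSet_Iic,
    Measure.restrict_apply' measurableSet_Ioo]
  have hset : Q μ ⁻¹' Iic a ∩ Ioo (0:ℝ) 1 = Iic (cdf μ a) ∩ Ioo (0:ℝ) 1 := by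
    ext t
    simp only [mem_inter_iff, mem_preimage, mem_Iic, and_congr_left_iff]
    intro ht
    exact galois ht a
  rw [hset, ← ofReal_cdf μ a]
  rcases lt_or_eq_of_le (cdf_le_one μ a) with h | h
  · have : Iic (cdf μ a) ∩ Ioo (0:ℝ) 1 = Ioc 0 (cdf μ a) := by
      ext t
      simp only [mem_inter_iff, mem_Iic, mem_Ioo, mem_Ioc]
      constructor
      · rintro ⟨h1, h2, h3⟩; exact ⟨h2, h1⟩
      · rintro ⟨h1, h2⟩; exact ⟨h2, h1, lt_of_le_of_lt h2 h⟩
    rw [this, Real.volume_Ioc, sub_zero]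
  · have : Iic (cdf μ a) ∩ Ioo (0:ℝ) 1 = Ioo (0:ℝ) 1 := by
      rw [inter_eq_right]
      intro t ht
      rw [h]; exact ht.2.le
    rw [this, Real.volume_Ioo, ← h]
    norm_num

lemma Qint (h : Integrable (fun x => x) μ) : IntegrableOn (Q μ) (Ioo (0:ℝ) 1) := by
  have := h
  rw [← Qmap (μ := μ)] at this
  have h2 := (integrable_map_measure aestronglyMeasurable_id aemeas_Q).1 this
  exact h2

lemma shortfall_repr (η : ℝ) :
    ∫ x, max (η - x) 0 ∂μ = ∫ t in Ioo (0:ℝ) 1, max (η - Q μ t) 0 := by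
  conv_lhs => rw [← Qmap (μ := μ)]
  rw [integral_map aemeas_Q
    (Continuous.aestronglyMeasurable (by continuity : Continuous fun x : ℝ => max (η - x) 0))]


/-- Lorenz-type primitive of the quantile. -/
def L (μ : Measure ℝ) (p : ℝ) : ℝ := ∫ t in Ioc (0:ℝ) p, Q μ t

variable (hQ : IntegrableOn (Q μ) (Ioo (0:ℝ) 1))

include hQ in
lemma QIoc {p : ℝ} (hp : p ≤ 1) : IntegrableOn (Q μ) (Ioc (0:ℝ) p) := by
  have h1 : IntegrableOn (Q μ) (Ioo (0:ℝ) p) :=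
    hQ.mono_set (Ioo_subset_Ioo le_rfl hp)
  exact h1.congr_set_ae Ioo_ae_eq_Ioc.symm

include hQ in
lemma subIoc (η : ℝ) {p : ℝ} (hp : p ≤ 1) :
    IntegrableOn (fun t => η - Q μ t) (Ioc (0:ℝ) p) :=
  (integrable_const η).sub (QIoc hQ hp)

include hQ in
lemma maxIoc (η : ℝ) {p : ℝ} (hp : p ≤ 1) :
    IntegrableOn (fun t => max (η - Q μ t) 0) (Ioc (0:ℝ) p) :=
  (subIoc hQ η hp).pos_part

include hQ in
lemma E1 (η : ℝ) {p : ℝ} (hp : p ∈ Icc (0:ℝ) 1) :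
    ∫ t in Ioc (0:ℝ) p, (η - Q μ t) = p * η - L μ p := by
  rw [integral_sub (integrable_const η) (QIoc hQ hp.2), setIntegral_const]
  rw [Real.volume_real_Ioc_of_le hp.1, sub_zero, smul_eq_mul, mul_comm]
  rfl

include hQ in
/-- Fenchel–Young inequality. -/
lemma youngIneq (η : ℝ) {p : ℝ} (hp : p ∈ Icc (0:ℝ) 1) :
    p * η - L μ p ≤ ∫ x, max (η - x) 0 ∂μ := by
  rw [← E1 hQ η hp, shortfall_repr,
    setIntegral_congr_set (Ioo_ae_eq_Ioc (a := (0:ℝ)) (b := (1:ℝ)))]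
  calc ∫ t in Ioc (0:ℝ) p, (η - Q μ t)
      ≤ ∫ t in Ioc (0:ℝ) p, max (η - Q μ t) 0 := by
        refine setIntegral_mono_on (subIoc hQ η hp.2) (maxIoc hQ η hp.2) measurableSet_Ioc ?_
        exact fun t _ => le_max_left _ _
    _ ≤ ∫ t in Ioc (0:ℝ) 1, max (η - Q μ t) 0 := by
        refine setIntegral_mono_set (maxIoc hQ η le_rfl) ?_
          (HasSubset.Subset.eventuallyLE (Ioc_subset_Ioc le_rfl hp.2))
        filter_upwards with t using le_max_right _ _

include hQ in
/-- Equality case taking `η` to be a `p`-quantile. -/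
lemma eqQuantile {p : ℝ} (hp : p ∈ Ioo (0:ℝ) 1) :
    ∫ x, max (Q μ p - x) 0 ∂μ = p * Q μ p - L μ p := by
  set η := Q μ p with hη
  rw [shortfall_repr, setIntegral_congr_set (Ioo_ae_eq_Ioc (a := (0:ℝ)) (b := (1:ℝ))),
    ← Ioc_union_Ioc_eq_Ioc hp.1.le hp.2.le,
    setIntegral_union (Ioc_disjoint_Ioc_of_le le_rfl) measurableSet_Ioc
      (maxIoc hQ η hp.2.le) ((maxIoc hQ η le_rfl).mono_set (Ioc_subset_Ioc hp.1.le le_rfl))]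
  have h1 : ∫ t in Ioc (0:ℝ) p, max (η - Q μ t) 0 = ∫ t in Ioc (0:ℝ) p, (η - Q μ t) := by
    refine setIntegral_congr_fun measurableSet_Ioc fun t ht => ?_
    have htI : t ∈ Ioo (0:ℝ) 1 := ⟨ht.1, lt_of_le_of_lt ht.2 hp.2⟩
    have : Q μ t ≤ η := Qmono htI hp ht.2
    exact max_eq_left (by linarith)
  have h2 : ∫ t in Ioc p 1, max (η - Q μ t) 0 = 0 := by
    rw [setIntegral_congr_set (Ioo_ae_eq_Ioc (a := p) (b := (1:ℝ))).symm]
    rw [setIntegral_congr_fun measurableSet_Ioo (g := fun _ => (0:ℝ))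
      (fun t ht => ?_), integral_zero]
    have htI : t ∈ Ioo (0:ℝ) 1 := ⟨lt_trans hp.1 ht.1, ht.2⟩
    have : η ≤ Q μ t := Qmono hp htI ht.1.le
    exact max_eq_right (by linarith)
  rw [h1, h2, add_zero]
  exact E1 hQ η ⟨hp.1.le, hp.2.le⟩

include hQ in
/-- Equality case taking `p = F(η)`. -/
lemma eqCdf (η : ℝ) :
    ∫ x, max (η - x) 0 ∂μ = cdf μ η * η - L μ (cdf μ η) := by
  set p := cdf μ η with hpdef
  have hp : p ∈ Icc (0:ℝ) 1 := ⟨cdf_nonneg μ η, cdf_le_one μ η⟩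
  rw [shortfall_repr, setIntegral_congr_set (Ioo_ae_eq_Ioc (a := (0:ℝ)) (b := (1:ℝ))),
    ← Ioc_union_Ioc_eq_Ioc hp.1 hp.2,
    setIntegral_union (Ioc_disjoint_Ioc_of_le le_rfl) measurableSet_Ioc
      (maxIoc hQ η hp.2) ((maxIoc hQ η le_rfl).mono_set (Ioc_subset_Ioc hp.1 le_rfl))]
  have h1 : ∫ t in Ioc (0:ℝ) p, max (η - Q μ t) 0 = ∫ t in Ioc (0:ℝ) p, (η - Q μ t) := by
    rw [setIntegral_congr_set (Ioo_ae_eq_Ioc (a := (0:ℝ)) (b := p)).symm,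
      setIntegral_congr_fun measurableSet_Ioo (g := fun t => η - Q μ t) (fun t ht => ?_),
      setIntegral_congr_set (Ioo_ae_eq_Ioc (a := (0:ℝ)) (b := p))]
    have htI : t ∈ Ioo (0:ℝ) 1 := ⟨ht.1, lt_of_lt_of_le ht.2 hp.2⟩
    have : Q μ t ≤ η := (galois htI η).2 ht.2.le
    exact max_eq_left (by linarith)
  have h2 : ∫ t in Ioc p 1, max (η - Q μ t) 0 = 0 := by
    rw [setIntegral_congr_set (Ioo_ae_eq_Ioc (a := p) (b := (1:ℝ))).symm,
      setIntegral_congr_fun measurableSet_Ioo (g := fun _ => (0:ℝ)) (fun t ht => ?_),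
      integral_zero]
    have htI : t ∈ Ioo (0:ℝ) 1 := ⟨lt_of_le_of_lt hp.1 ht.1, ht.2⟩
    have hnot : ¬ Q μ t ≤ η := fun hc => absurd ((galois htI η).1 hc) (not_le.2 ht.1)
    exact max_eq_right (by push_neg at hnot; linarith)
  rw [h1, h2, add_zero, E1 hQ η hp]


end Stmt8Aux
end Helper

open Stmt8Aux
open scoped Topology

set_option maxHeartbeats 2000000 in
/-- the supremum of the Lorenz-function gap over `[0,1]` equals the supremum
of the shortfall-function gap over `ℝ`. -/
theorem stmt8 {Ω : Type*} [MeasurableSpace Ω] (P : Measure Ω) [IsProbabilityMeasure P]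
    (X Y : Ω → ℝ) (hX : Integrable X P) (hY : Integrable Y P) :
    sSup ((fun p => lorenz P Y p - lorenz P X p) '' Set.Icc (0:ℝ) 1) =
      sSup (Set.range fun η : ℝ => shortfall P X η - shortfall P Y η) := by
  classical
  set μX := P.map X with hμX
  set μY := P.map Y with hμY
  haveI : IsProbabilityMeasure μX := Measure.isProbabilityMeasure_map hX.aemeasurable
  haveI : IsProbabilityMeasure μY := Measure.isProbabilityMeasure_map hY.aemeasurable
  -- bridging lemmas
  have hcdf : ∀ (Z : Ω → ℝ), Integrable Z P → ∀ η, cdfRV P Z η = ProbabilityTheory.cdf (P.map Z) η := by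
    intro Z hZ η
    haveI : IsProbabilityMeasure (P.map Z) := Measure.isProbabilityMeasure_map hZ.aemeasurable
    rw [ProbabilityTheory.cdf_eq_real, measureReal_def, Measure.map_apply_of_aemeasurable hZ.aemeasurable measurableSet_Iic]
    rfl
  have hqf : ∀ (Z : Ω → ℝ), Integrable Z P → qf P Z = Q (P.map Z) := by
    intro Z hZ
    funext p
    unfold qf Q
    congr 1
    ext η
    simp only [Set.mem_setOf_eq, hcdf Z hZ η]
  have hshort : ∀ (Z : Ω → ℝ), Integrable Z P → ∀ η,
      shortfall P Z η = ∫ x, max (η - x) 0 ∂(P.map Z) := by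
    intro Z hZ η
    rw [shortfall, integral_map hZ.aemeasurable
      (Continuous.aestronglyMeasurable (by continuity : Continuous fun x : ℝ => max (η - x) 0))]
  have hlorenz : ∀ (Z : Ω → ℝ), Integrable Z P → ∀ p ∈ Icc (0:ℝ) 1,
      lorenz P Z p = L (P.map Z) p := by
    intro Z hZ p hp
    rw [lorenz, hqf Z hZ, intervalIntegral.integral_of_le hp.1]
    rfl
  have hidX : Integrable (fun x : ℝ => x) μX :=
    (integrable_map_measure aestronglyMeasurable_id hX.aemeasurable).2 hX
  have hidY : Integrable (fun x : ℝ => x) μY :=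
    (integrable_map_measure aestronglyMeasurable_id hY.aemeasurable).2 hY
  have hQX : IntegrableOn (Q μX) (Ioo (0:ℝ) 1) := Qint hidX
  have hQY : IntegrableOn (Q μY) (Ioo (0:ℝ) 1) := Qint hidY
  -- the lorenz gap as a primitive
  set f : ℝ → ℝ := fun t => Q μY t - Q μX t with hf
  set g : ℝ → ℝ := fun p => ∫ t in Ioc (0:ℝ) p, f t with hg
  have key : ∀ p ∈ Icc (0:ℝ) 1, lorenz P Y p - lorenz P X p = g p := by
    intro p hp
    rw [hlorenz Y hY p hp, hlorenz X hX p hp, hg]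
    simp only [hf]
    rw [integral_sub (QIoc hQY hp.2) (QIoc hQX hp.2)]
    rfl
  have hfInt : IntegrableOn f (Ioc (0:ℝ) 1) := (QIoc hQY le_rfl).sub (QIoc hQX le_rfl)
  -- bound for the lorenz gaps
  have hgbd : ∀ p ∈ Icc (0:ℝ) 1, g p ≤ ∫ t in Ioc (0:ℝ) 1, |f t| := by
    intro p hp
    calc g p ≤ ∫ t in Ioc (0:ℝ) p, |f t| := by
          refine setIntegral_mono_on (hfInt.mono_set (Ioc_subset_Ioc le_rfl hp.2))
            ((hfInt.mono_set (Ioc_subset_Ioc le_rfl hp.2)).abs) measurableSet_Ioc ?_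
          exact fun t _ => le_abs_self _
      _ ≤ ∫ t in Ioc (0:ℝ) 1, |f t| := by
          refine setIntegral_mono_set hfInt.abs ?_
            (HasSubset.Subset.eventuallyLE (Ioc_subset_Ioc le_rfl hp.2))
          filter_upwards with t using abs_nonneg _
  have neL : ((fun p => lorenz P Y p - lorenz P X p) '' Set.Icc (0:ℝ) 1).Nonempty :=
    (nonempty_Icc.2 zero_le_one).image _
  have bddL : BddAbove ((fun p => lorenz P Y p - lorenz P X p) '' Set.Icc (0:ℝ) 1) := by
    refine ⟨∫ t in Ioc (0:ℝ) 1, |f t|, ?_⟩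
    rintro l ⟨p, hp, rfl⟩
    have h := hgbd p hp
    rw [← key p hp] at h
    exact h
  -- each shortfall gap is at most a lorenz gap
  have hSL : ∀ η : ℝ, shortfall P X η - shortfall P Y η ≤
      lorenz P Y (ProbabilityTheory.cdf μX η) - lorenz P X (ProbabilityTheory.cdf μX η) := by
    intro η
    set p := ProbabilityTheory.cdf μX η with hpdef
    have hp : p ∈ Icc (0:ℝ) 1 := ⟨ProbabilityTheory.cdf_nonneg μX η, ProbabilityTheory.cdf_le_one μX η⟩
    have h1 : shortfall P X η = p * η - L μX p := by
      rw [hshort X hX η]; exact eqCdf hQX η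
    have h2 : p * η - L μY p ≤ shortfall P Y η := by
      rw [hshort Y hY η]; exact youngIneq hQY η hp
    rw [hlorenz Y hY p hp, hlorenz X hX p hp, h1]
    linarith
  have hmemL : ∀ η : ℝ, ∃ l ∈ ((fun p => lorenz P Y p - lorenz P X p) '' Set.Icc (0:ℝ) 1),
      shortfall P X η - shortfall P Y η ≤ l := fun η =>
    ⟨_, ⟨ProbabilityTheory.cdf μX η,
      ⟨ProbabilityTheory.cdf_nonneg μX η, ProbabilityTheory.cdf_le_one μX η⟩, rfl⟩, hSL η⟩
  have bddS : BddAbove (Set.range fun η : ℝ => shortfall P X η - shortfall P Y η) := by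
    refine ⟨∫ t in Ioc (0:ℝ) 1, |f t|, ?_⟩
    rintro s ⟨η, rfl⟩
    obtain ⟨l, ⟨p, hp, rfl⟩, hle⟩ := hmemL η
    have h := hgbd p hp
    rw [← key p hp] at h
    exact hle.trans h
  have neS : (Set.range fun η : ℝ => shortfall P X η - shortfall P Y η).Nonempty := ⟨_, 0, rfl⟩
  -- interior lorenz gaps are at most shortfall gaps
  have hinterior : ∀ p ∈ Ioo (0:ℝ) 1,
      lorenz P Y p - lorenz P X p ≤ sSup (Set.range fun η : ℝ => shortfall P X η - shortfall P Y η) := by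
    intro p hp
    have hpc : p ∈ Icc (0:ℝ) 1 := ⟨hp.1.le, hp.2.le⟩
    set η := Q μY p with hη
    have h1 : shortfall P Y η = p * η - L μY p := by
      rw [hshort Y hY η]; exact eqQuantile hQY hp
    have h2 : p * η - L μX p ≤ shortfall P X η := by
      rw [hshort X hX η]; exact youngIneq hQX η hpc
    have h3 : lorenz P Y p - lorenz P X p ≤ shortfall P X η - shortfall P Y η := by
      rw [hlorenz Y hY p hpc, hlorenz X hX p hpc, h1]
      linarith
    exact h3.trans (le_csSup bddS ⟨η, rfl⟩)
  -- extend to the closed interval by continuity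
  have hcont : ContinuousOn g (Icc (0:ℝ) 1) :=
    intervalIntegral.continuousOn_primitive (hfInt.congr_set_ae Ioc_ae_eq_Icc.symm)
  have hIcc : ∀ p ∈ Icc (0:ℝ) 1,
      lorenz P Y p - lorenz P X p ≤ sSup (Set.range fun η : ℝ => shortfall P X η - shortfall P Y η) := by
    intro p hp
    rw [key p hp]
    set u : ℕ → ℝ := fun n => p + (1/2 - p) * (1/((n:ℝ)+2)) with hu
    have hu1 : ∀ n, u n ∈ Ioo (0:ℝ) 1 := by
      intro n
      have hc0 : (0:ℝ) < 1/((n:ℝ)+2) := by positivity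
      have hc1 : 1/((n:ℝ)+2) ≤ 1/2 := by
        apply one_div_le_one_div_of_le <;> [norm_num; (push_cast; linarith [Nat.cast_nonneg (α := ℝ) n])]
      have hc2 : 1/((n:ℝ)+2) ≤ 1 := hc1.trans (by norm_num)
      have hval : u n = p + (1/2 - p) * (1/((n:ℝ)+2)) := rfl
      rw [mem_Ioo, hval]
      constructor
      · nlinarith [mul_nonneg hp.1 (sub_nonneg.2 hc2)]
      · nlinarith [mul_nonneg (sub_nonneg.2 hp.2) (sub_nonneg.2 hc2)]
    have hu2 : Tendsto u atTop (𝓝 p) := by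
      have h0 : Tendsto (fun n : ℕ => 1/((n:ℝ)+2)) atTop (𝓝 0) := by
        simp only [one_div]
        exact (tendsto_atTop_add_const_right atTop 2 tendsto_natCast_atTop_atTop).inv_tendsto_atTop
      have := (tendsto_const_nhds (x := (1/2 - p)) (f := atTop (α := ℕ))).mul h0
      rw [mul_zero] at this
      have := (tendsto_const_nhds (x := p) (f := atTop (α := ℕ))).add this
      rwa [add_zero] at this
    have htend : Tendsto (fun n => g (u n)) atTop (𝓝 (g p)) :=
      ((hcont p hp).tendsto).comp
        (tendsto_nhdsWithin_of_tendsto_nhds_of_eventually_within u hu2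
          (Eventually.of_forall fun n => Ioo_subset_Icc_self (hu1 n)))
    refine le_of_tendsto htend (Eventually.of_forall fun n => ?_)
    rw [← key (u n) (Ioo_subset_Icc_self (hu1 n))]
    exact hinterior (u n) (hu1 n)
  refine le_antisymm (csSup_le neL ?_) (csSup_le neS ?_)
  · rintro l ⟨p, hp, rfl⟩
    exact hIcc p hp
  · rintro s ⟨η, rfl⟩
    obtain ⟨l, hl, hle⟩ := hmemL η
    exact hle.trans (le_csSup bddL hl)

end
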